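/- Let S, N be positive reals with S ≤ N, and 1/2 < α < 1, and set θ = (1−α)²(1+3α)/((1+α²)(3α−1)). Define T₁₂ = S^{1/2} N^{(3−α)/(1+3α)}, T₂₁ = S·N^{(1−α)/(1+α)}, and T₂₂ = S^{(7α−3)/(6α−2)} N^{(1−α)/(3α−1)}. Then T₂₂ ≤ T₁₂^θ · T₂₁^{1−θ} ≤ max{T₁₂, T₂₁}. -/

import Mathlib

/-- For `1 ≤ S ≤ N` and `1/2 < α < 1`, with `θ = (1−α)²(1+3α)/((1+α²)(3α−1))`,
`T₁₂ = S^{1/2} N^{(3−α)/(1+3α)}`, `T₂₁ = S·N^{(1−α)/(1+α)}`,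
`T₂₂ = S^{(7α−3)/(6α−2)} N^{(1−α)/(3α−1)}`, one has
`T₂₂ ≤ T₁₂^θ · T₂₁^{1−θ} ≤ max{T₁₂, T₂₁}`. -/
theorem T22_le_max (S N α θ T₁₂ T₂₁ T₂₂ : ℝ)
    (hS : 1 ≤ S) (hSN : S ≤ N)
    (h1 : 1 / 2 < α) (h2 : α < 1)
    (hθ : θ = (1 - α) ^ 2 * (1 + 3 * α) / ((1 + α ^ 2) * (3 * α - 1)))
    (h12 : T₁₂ = S ^ ((1 : ℝ) / 2) * N ^ ((3 - α) / (1 + 3 * α)))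
    (h21 : T₂₁ = S * N ^ ((1 - α) / (1 + α)))
    (h22 : T₂₂ = S ^ ((7 * α - 3) / (6 * α - 2)) * N ^ ((1 - α) / (3 * α - 1))) :
    T₂₂ ≤ T₁₂ ^ θ * T₂₁ ^ (1 - θ) ∧ T₁₂ ^ θ * T₂₁ ^ (1 - θ) ≤ max T₁₂ T₂₁ := by
  have hS0 : (0:ℝ) < S := by linarith
  have hN0 : (0:ℝ) < N := by linarith
  have hd1 : (0:ℝ) < 3 * α - 1 := by linarith
  have hd2 : (0:ℝ) < 1 + 3 * α := by linarith
  have hd3 : (0:ℝ) < 1 + α := by linarith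
  have hd4 : (0:ℝ) < 1 + α ^ 2 := by positivity
  have hθ0 : 0 ≤ θ := by
    rw [hθ]; apply div_nonneg; nlinarith; nlinarith
  have hθ1 : θ ≤ 1 := by
    rw [hθ, div_le_one (by nlinarith)]; nlinarith
  have hNe : (3 - α) / (1 + 3 * α) * θ + (1 - α) / (1 + α) * (1 - θ)
      = (1 - α) / (3 * α - 1) := by
    rw [hθ]; field_simp; ring
  have key : T₁₂ ^ θ * T₂₁ ^ (1 - θ)
      = S ^ (1 / 2 * θ + (1 - θ)) * N ^ ((1 - α) / (3 * α - 1)) := by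
    rw [h12, h21, Real.mul_rpow (by positivity) (by positivity),
      Real.mul_rpow (by positivity) (by positivity),
      ← Real.rpow_mul hS0.le, ← Real.rpow_mul hN0.le, ← Real.rpow_mul hN0.le,
      ← hNe, mul_mul_mul_comm, ← Real.rpow_add hS0, ← Real.rpow_add hN0]
  have hθle : θ ≤ (1 - α) / (3 * α - 1) := by
    rw [hθ, div_le_div_iff₀ (by nlinarith) hd1]
    nlinarith [mul_nonneg (mul_nonneg hd1.le (by linarith : (0:ℝ) ≤ 1 - α))
      (mul_nonneg (by linarith : (0:ℝ) ≤ α) (by linarith : (0:ℝ) ≤ 2 * α - 1))]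
  have hexp : (7 * α - 3) / (6 * α - 2) ≤ 1 / 2 * θ + (1 - θ) := by
    have h6 : (6 * α - 2) ≠ 0 := ne_of_gt (by linarith)
    have heq : (7 * α - 3) / (6 * α - 2) = 1 - (1 - α) / (3 * α - 1) / 2 := by
      rw [eq_sub_iff_add_eq, div_div, div_add_div _ _ h6 (mul_pos hd1 two_pos).ne',
        div_eq_one_iff_eq (mul_ne_zero h6 (mul_pos hd1 two_pos).ne')]
      ring
    rw [heq]; linarith
  have hT12 : 0 < T₁₂ := by rw [h12]; positivity
  have hT21 : 0 < T₂₁ := by rw [h21]; positivity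
  constructor
  · rw [h22, key]
    exact mul_le_mul_of_nonneg_right (Real.rpow_le_rpow_of_exponent_le hS hexp)
      (Real.rpow_nonneg hN0.le _)
  · have hmax : 0 < max T₁₂ T₂₁ := lt_max_of_lt_left hT12
    calc T₁₂ ^ θ * T₂₁ ^ (1 - θ)
        ≤ (max T₁₂ T₂₁) ^ θ * (max T₁₂ T₂₁) ^ (1 - θ) := by
          apply mul_le_mul (Real.rpow_le_rpow hT12.le (le_max_left _ _) hθ0)
            (Real.rpow_le_rpow hT21.le (le_max_right _ _) (by linarith))
            (Real.rpow_nonneg hT21.le _) (Real.rpow_nonneg hmax.le _)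
      _ = max T₁₂ T₂₁ := by
          rw [← Real.rpow_add hmax]; simp
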